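/- arXiv:2603.02495 — 8 statements merged into one kernel-verified Lean document; each statement's English description precedes it below -/
import Mathlib

section
/- The social welfare function is monotonically increasing: for any revealed target set A ⊆ T and any target t ∈ T \ A, F(A ∪ {t}) ≥ F(A). -/
open Finset

variable {Agent Target : Type*}

def posN [DecidableEq Target] (N : Agent → Finset Target) (f : Target → Bool) (x : Agent) :
    Finset Target :=
  (N x).filter (fun t => f t = true)

def negN [DecidableEq Target] (N : Agent → Finset Target) (f : Target → Bool) (x : Agent) :
    Finset Target :=
  (N x).filter (fun t => f t = false)

/-- The probability mass agent `x` places on positive targets given revealed set `S`. -/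
noncomputable def Q [DecidableEq Target] (N : Agent → Finset Target) (f : Target → Bool)
    (S : Finset Target) (x : Agent) : ℝ :=
  if (posN N f x ∩ S).Nonempty then 1
  else if (N x).Nonempty then
    ((posN N f x).card : ℝ) /
      (((posN N f x).card : ℝ) + (((negN N f x).card : ℝ) - ((negN N f x ∩ S).card : ℝ)))
  else 0

/-- Social welfare. -/
noncomputable def F [Fintype Agent] [DecidableEq Target] (N : Agent → Finset Target)
    (f : Target → Bool) (S : Finset Target) : ℝ :=
  ∑ x, Q N f S x

/-- The social welfare function is monotonically increasing: revealing one more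
target never decreases welfare. -/
theorem social_welfare_monotone [Fintype Agent] [DecidableEq Target]
    (N : Agent → Finset Target) (f : Target → Bool)
    (A : Finset Target) (t : Target) (ht : t ∉ A) :
    F N f A ≤ F N f (insert t A) := by
  unfold F
  apply Finset.sum_le_sum
  intro x _
  unfold Q
  have hsub : posN N f x ∩ A ⊆ posN N f x ∩ insert t A :=
    inter_subset_inter_left (subset_insert t A)
  have hnsub : negN N f x ∩ A ⊆ negN N f x ∩ insert t A :=
    inter_subset_inter_left (subset_insert t A)
  set p : ℝ := ((posN N f x).card : ℝ) with hp
  set n : ℝ := ((negN N f x).card : ℝ) with hn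
  have hp0 : 0 ≤ p := by positivity
  by_cases h1 : (posN N f x ∩ A).Nonempty
  · rw [if_pos h1, if_pos (h1.mono hsub)]
  · rw [if_neg h1]
    have hcA : ((negN N f x ∩ A).card : ℝ) ≤ n := by
      rw [hn]; exact_mod_cast Finset.card_le_card (show negN N f x ∩ A ⊆ negN N f x from inter_subset_left)
    have hcB : ((negN N f x ∩ insert t A).card : ℝ) ≤ n := by
      rw [hn]; exact_mod_cast Finset.card_le_card (show negN N f x ∩ insert t A ⊆ negN N f x from inter_subset_left)
    have hAB : ((negN N f x ∩ A).card : ℝ) ≤ ((negN N f x ∩ insert t A).card : ℝ) := by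
      exact_mod_cast Finset.card_le_card hnsub
    by_cases h2 : (posN N f x ∩ insert t A).Nonempty
    · rw [if_pos h2]
      by_cases hN : (N x).Nonempty
      · rw [if_pos hN]
        apply div_le_one_of_le₀
        · linarith
        · linarith
      · rw [if_neg hN]; norm_num
    · rw [if_neg h2]
      by_cases hN : (N x).Nonempty
      · rw [if_pos hN, if_pos hN]
        rcases eq_or_lt_of_le hp0 with hp0' | hp0'
        · rw [← hp0']; simp
        · apply div_le_div_of_nonneg_left hp0
          · linarith
          · linarith
      · rw [if_neg hN, if_neg hN]
end

section
/- There exists a bipartite graph with agent set X, target labeling f, and sets A ⊆ B ⊆ T and t ∈ T \ B consisting only of negatively labeled targets, such that F(A ∪ {t}) − F(A) < F(B ∪ {t}) − F(B). In particular, the social welfare function is not submodular when negative targets may be revealed. Concretely, take 4 agents x₁,…,x₄, four positive targets t₁⁺,…,t₄⁺ with xᵢ adjacent to tᵢ⁺, and two negative targets t₅⁻, t₆⁻ each adjacent to all four agents; with A = ∅ and B = {t₅⁻}, one has F(A ∪ {t₆⁻}) − F(A) = 2/3 < 2 = F(B ∪ {t₆⁻}) − F(B). -/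
open Finset

variable {Agent Target : Type*}

def N0 : Fin 4 → Finset (Fin 6) := fun i => {Fin.castLE (by norm_num) i, 4, 5}
def f0 : Fin 6 → Bool := fun s => decide (s.val < 4)

lemma Q_eval (S : Finset (Fin 6)) (x : Fin 4) (h1 : posN N0 f0 x ∩ S = ∅)
    (k : ℕ) (h2 : (negN N0 f0 x ∩ S).card = k) :
    Q N0 f0 S x = 1 / (3 - (k : ℝ)) := by
  have hp : (posN N0 f0 x).card = 1 := by clear h1 h2; revert x; decide
  have hn : (negN N0 f0 x).card = 2 := by clear h1 h2; revert x; decide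
  have hne : (N0 x).Nonempty := by clear h1 h2 hp hn; revert x; decide
  rw [Q, if_neg (by rw [h1]; exact Finset.not_nonempty_empty), if_pos hne, hp, hn, h2]
  norm_num
  ring

lemma F_eval (S : Finset (Fin 6)) (h1 : ∀ x, posN N0 f0 x ∩ S = ∅)
    (k : ℕ) (h2 : ∀ x, (negN N0 f0 x ∩ S).card = k) :
    F N0 f0 S = 4 / (3 - (k : ℝ)) := by
  simp only [F, Fin.sum_univ_four, Q_eval S _ (h1 _) k (h2 _)]
  ring
/-- There exists a bipartite instance (4 agents, each adjacent to a private positive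
target and to two common negative targets) and sets `A ⊆ B` of negatively labeled
targets with `t ∉ B` negative, on which the social welfare function violates
submodularity: `F(A ∪ {t}) − F(A) = 2/3 < 2 = F(B ∪ {t}) − F(B)`. -/
theorem social_welfare_not_submodular_with_negatives :
    ∃ (N : Fin 4 → Finset (Fin 6)) (f : Fin 6 → Bool)
      (A B : Finset (Fin 6)) (t : Fin 6),
      (∀ i : Fin 4, N i = {Fin.castLE (by norm_num) i, 4, 5}) ∧
      (∀ s : Fin 6, f s = decide (s.val < 4)) ∧
      A ⊆ B ∧ t ∉ B ∧ (∀ s ∈ insert t B, f s = false) ∧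
      F N f (insert t A) - F N f A = 2 / 3 ∧
      F N f (insert t B) - F N f B = 2 ∧
      F N f (insert t A) - F N f A < F N f (insert t B) - F N f B := by
  have e0 : F N0 f0 ∅ = 4 / (3 - (0:ℕ)) := F_eval _ (by decide) 0 (by decide)
  have e1 : F N0 f0 (insert 5 ∅) = 4 / (3 - (1:ℕ)) := F_eval _ (by decide) 1 (by decide)
  have e2 : F N0 f0 ({4} : Finset (Fin 6)) = 4 / (3 - (1:ℕ)) := F_eval _ (by decide) 1 (by decide)
  have e3 : F N0 f0 (insert 5 {4}) = 4 / (3 - (2:ℕ)) := F_eval _ (by decide) 2 (by decide)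
  refine ⟨N0, f0, ∅, {4}, 5, fun i => rfl, fun s => rfl, Finset.empty_subset _, by decide,
    by decide, ?_, ?_, ?_⟩ <;> simp only [e0, e1, e2, e3] <;> norm_num
end

section
/- If every agent is c-bounded (has at most c negatively labeled neighbors, with c ≥ 1) and has at least one positive neighbor whenever it contributes positive welfare, then for every revealed set S: F_p(S) ≤ F(S) ≤ c·F_p(S), where F_p is the proxy social welfare. -/
open Finset

variable {Agent Target : Type*}

/-- The proxy probability mass: revealing negative neighbors beyond the first only
contributes the amount the first one helped. -/
noncomputable def Qp [DecidableEq Target] (N : Agent → Finset Target) (f : Target → Bool)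
    (S : Finset Target) (x : Agent) : ℝ :=
  if (posN N f x ∩ S).Nonempty then 1
  else if (N x).Nonempty then
    ((posN N f x).card : ℝ) /
        (((N x).card : ℝ) - (if 1 ≤ (negN N f x ∩ S).card then 1 else 0)) *
      (1 + (((negN N f x ∩ S).card - 1 : ℕ) : ℝ) / ((N x).card : ℝ))
  else 0

/-- Proxy social welfare. -/
noncomputable def Fp [Fintype Agent] [DecidableEq Target] (N : Agent → Finset Target)
    (f : Target → Bool) (S : Finset Target) : ℝ :=
  ∑ x, Qp N f S x


lemma card_split [DecidableEq Target] (N : Agent → Finset Target) (f : Target → Bool)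
    (x : Agent) : (posN N f x).card + (negN N f x).card = (N x).card := by
  classical
  have h := Finset.card_filter_add_card_filter_not
    (s := N x) (p := fun t => f t = true)
  have heq : (N x).filter (fun t => f t = false)
      = (N x).filter (fun t => ¬ f t = true) := by
    apply Finset.filter_congr
    intro t _
    simp [Bool.not_eq_true]
  rw [posN, negN, heq]
  exact h

lemma key_ineq (c P Nn K : ℝ) (hC1 : 1 ≤ c) (hP1 : 1 ≤ P) (hK1 : 1 ≤ K)
    (hKN : K ≤ Nn) (hNC : Nn ≤ c) :
    P / (P + Nn - 1) * (1 + (K - 1) / (P + Nn)) ≤ P / (P + (Nn - K)) ∧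
      P / (P + (Nn - K)) ≤ c * (P / (P + Nn - 1) * (1 + (K - 1) / (P + Nn))) := by
  have hd1 : (0:ℝ) < P + Nn - 1 := by linarith
  have hd2 : (0:ℝ) < P + (Nn - K) := by linarith
  have hd3 : (0:ℝ) < P + Nn := by linarith
  have hrw : P / (P + Nn - 1) * (1 + (K - 1) / (P + Nn))
      = P * (P + Nn + K - 1) / ((P + Nn - 1) * (P + Nn)) := by
    field_simp
    ring_nf
  rw [hrw]
  constructor
  · rw [div_le_div_iff₀ (by positivity) hd2]
    nlinarith [mul_nonneg (mul_nonneg (by linarith : (0:ℝ) ≤ P) (by linarith : (0:ℝ) ≤ K))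
      (by linarith : (0:ℝ) ≤ K - 1)]
  · rw [mul_div_assoc', div_le_div_iff₀ hd2 (by positivity)]
    have hstep : P + Nn - 1 ≤ c * (P + (Nn - K)) := by
      nlinarith [mul_nonneg (by linarith : (0:ℝ) ≤ c - 1) (by linarith : (0:ℝ) ≤ P - 1)]
    nlinarith [mul_le_mul_of_nonneg_left hstep hd3.le,
      mul_nonneg (mul_nonneg (by linarith : (0:ℝ) ≤ c)
        (by linarith : (0:ℝ) ≤ P + (Nn - K))) (by linarith : (0:ℝ) ≤ K - 1),
      mul_pos hd3 hd2]

lemma pointwise [DecidableEq Target] (N : Agent → Finset Target) (f : Target → Bool)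
    (c : ℕ) (hc : 1 ≤ c) (x : Agent) (hb : (negN N f x).card ≤ c) (S : Finset Target) :
    Qp N f S x ≤ Q N f S x ∧ Q N f S x ≤ (c : ℝ) * Qp N f S x := by
  have hC1 : (1:ℝ) ≤ (c:ℝ) := by exact_mod_cast hc
  have hsplit := card_split N f x
  have hM : ((N x).card : ℝ) = ((posN N f x).card : ℝ) + ((negN N f x).card : ℝ) := by
    exact_mod_cast hsplit.symm
  have hkn : (negN N f x ∩ S).card ≤ (negN N f x).card :=
    Finset.card_le_card (Finset.inter_subset_left)
  unfold Q Qp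
  split_ifs with h1 h2 hk
  · exact ⟨le_refl 1, by linarith⟩
  · -- N x nonempty, 1 ≤ k
    rcases Nat.eq_zero_or_pos (posN N f x).card with hp0 | hp1
    · norm_num [hp0]
    · have hck : (((negN N f x ∩ S).card - 1 : ℕ) : ℝ)
          = ((negN N f x ∩ S).card : ℝ) - 1 := by
        have := Nat.cast_sub hk (R := ℝ)
        simpa using this
      rw [hck, hM]
      exact key_ineq (c:ℝ) _ _ _ hC1 (by exact_mod_cast hp1) (by exact_mod_cast hk)
        (by exact_mod_cast hkn) (by exact_mod_cast hb)
  · -- N x nonempty, k = 0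
    have hk0 : (negN N f x ∩ S).card = 0 := by omega
    rw [hk0, hM]
    simp only [Nat.zero_sub, Nat.cast_zero, zero_div, add_zero, sub_zero, mul_one]
    have hQ : (0:ℝ) ≤ ((posN N f x).card : ℝ)
        / (((posN N f x).card : ℝ) + ((negN N f x).card : ℝ)) := by positivity
    exact ⟨le_refl _, by nlinarith⟩
  · exact ⟨le_refl 0, by norm_num⟩

/-- If every agent is `c`-bounded (at most `c` negative neighbors, `c ≥ 1`) and every
agent contributing positive welfare has a positive neighbor, then for every revealed
set `S`: `F_p(S) ≤ F(S) ≤ c·F_p(S)`. -/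
theorem proxy_welfare_bounds [Fintype Agent] [DecidableEq Target]
    (N : Agent → Finset Target) (f : Target → Bool)
    (c : ℕ) (hc : 1 ≤ c)
    (hbounded : ∀ x : Agent, (negN N f x).card ≤ c)
    (hpos : ∀ (x : Agent) (S : Finset Target), 0 < Q N f S x → 0 < (posN N f x).card) :
    ∀ S : Finset Target, Fp N f S ≤ F N f S ∧ F N f S ≤ (c : ℝ) * Fp N f S := by
  intro S
  constructor
  · unfold F Fp
    exact Finset.sum_le_sum (fun x _ => (pointwise N f c hc x (hbounded x) S).1)
  · unfold F Fp
    rw [Finset.mul_sum]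
    exact Finset.sum_le_sum (fun x _ => (pointwise N f c hc x (hbounded x) S).2)
end

section
/- If a₁ ≥ a₂ ≥ … ≥ a_K ≥ 0 are nonnegative reals, w ≥ 1 an integer with K ≥ w, and K_a = ⌈K/w⌉, then Σ_{i=1}^{K_a} aᵢ ≥ (1/w) Σ_{i=1}^{K} aᵢ. -/
open Finset

lemma sum_div_block (w : ℕ) (a : ℕ → ℝ) (m : ℕ) :
    ∑ i ∈ Finset.range (m * w), a (i / w) = w * ∑ i ∈ Finset.range m, a i := by
  induction m with
  | zero => simp
  | succ m ih =>
    rw [Nat.succ_mul, Finset.sum_range_add, ih, Finset.sum_range_succ]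
    have : ∀ i ∈ Finset.range w, a ((m * w + i) / w) = a m := by
      intro i hi
      simp only [Finset.mem_range] at hi
      congr 1
      have hpos : 0 < w := by omega
      rw [mul_comm, Nat.mul_add_div hpos, Nat.div_eq_of_lt hi, add_zero]
    rw [Finset.sum_congr rfl this, Finset.sum_const, Finset.card_range]
    push_cast
    ring

/-- Averaging lemma: for a non-increasing sequence of nonnegative reals `a₀ ≥ … ≥ a_{K−1}`
and `K ≥ w ≥ 1`, the sum of the first `⌈K/w⌉` terms is at least `1/w` of the total sum. -/
theorem first_ceil_div_sum_ge (K w : ℕ) (hw : 1 ≤ w) (hK : w ≤ K) (a : ℕ → ℝ)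
    (hnonneg : ∀ i, i < K → 0 ≤ a i)
    (hmono : ∀ i j, i ≤ j → j < K → a j ≤ a i) :
    (1 / (w : ℝ)) * ∑ i ∈ Finset.range K, a i ≤ ∑ i ∈ Finset.range ((K + w - 1) / w), a i := by
  set m := (K + w - 1) / w with hm
  have hwpos : 0 < w := hw
  have hKm : K ≤ m * w := by
    have h1 : m * w + (K + w - 1) % w = K + w - 1 := by
      rw [hm]; rw [mul_comm]; exact Nat.div_add_mod _ _
    have h2 := Nat.mod_lt (K + w - 1) hwpos
    omega
  have hmK : m ≤ K := by
    have h1 : K + w - 1 < (K + 1) * w := by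
      have h2 : K * 1 ≤ K * w := Nat.mul_le_mul_left K hw
      have h3 : (K + 1) * w = K * w + w := by ring
      omega
    have := (Nat.div_lt_iff_lt_mul hwpos).mpr h1
    omega
  have key : ∑ i ∈ Finset.range K, a i ≤ w * ∑ i ∈ Finset.range m, a i := by
    rw [← sum_div_block]
    calc ∑ i ∈ Finset.range K, a i ≤ ∑ i ∈ Finset.range K, a (i / w) := by
          apply Finset.sum_le_sum
          intro i hi
          simp only [Finset.mem_range] at hi
          exact hmono (i / w) i (Nat.div_le_self i w) hi
      _ ≤ ∑ i ∈ Finset.range (m * w), a (i / w) := by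
          apply Finset.sum_le_sum_of_subset_of_nonneg
          · exact Finset.range_subset_range.2 hKm
          · intro i hi _
            simp only [Finset.mem_range] at hi
            apply hnonneg
            have : i / w < m := (Nat.div_lt_iff_lt_mul hwpos).2 hi
            omega
  have hwR : (0:ℝ) < w := by exact_mod_cast hwpos
  rw [div_mul_eq_mul_div, one_mul, div_le_iff₀ hwR, mul_comm]
  exact key
end

section
/- In the grouped setting restricted to revealing positive targets, allocating budget K_a = ⌈K/w⌉ to each group a and running greedy separately on each group yields, for every group a, welfare gain G(S_{K_a}) ≥ ((1 − 1/e)/w) · OPT_a^K, where OPT_a^K is the maximum welfare gain achievable for group a alone with full budget K. -/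
open Finset

variable {Agent Target : Type*}

/-- The welfare gain of group `A` from revealing `S`. -/
noncomputable def Ggain [DecidableEq Target] (N : Agent → Finset Target) (f : Target → Bool)
    (A : Finset Agent) (S : Finset Target) : ℝ :=
  ∑ x ∈ A, Q N f S x - ∑ x ∈ A, Q N f ∅ x

/-- A greedy reveal sequence with candidates drawn from `C`: start from `∅` and at each
step insert a candidate target of maximal resulting objective value. -/
def IsGreedyOn [DecidableEq Target] (C : Finset Target) (g : Finset Target → ℝ)
    (seq : ℕ → Finset Target) : Prop :=
  seq 0 = ∅ ∧ ∀ i : ℕ, ∃ t ∈ C, seq (i + 1) = insert t (seq i) ∧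
    ∀ t' ∈ C, g (insert t' (seq i)) ≤ g (insert t (seq i))


section Aux
variable [DecidableEq Target] {N : Agent → Finset Target} {f : Target → Bool}

/-- weight -/
noncomputable def cwt [DecidableEq Target] (N : Agent → Finset Target) (f : Target → Bool)
    (x : Agent) : ℝ :=
  1 - ((posN N f x).card : ℝ) / (((posN N f x).card : ℝ) + ((negN N f x).card : ℝ))

/-- coverage indicator -/
noncomputable def indc [DecidableEq Target] (N : Agent → Finset Target) (f : Target → Bool)
    (x : Agent) (S : Finset Target) : ℝ :=
  if (posN N f x ∩ S).Nonempty then 1 else 0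

noncomputable def Gcov [DecidableEq Target] (N : Agent → Finset Target) (f : Target → Bool)
    (A : Finset Agent) (S : Finset Target) : ℝ :=
  ∑ x ∈ A, cwt N f x * indc N f x S

variable [DecidableEq Target] {N : Agent → Finset Target} {f : Target → Bool}

lemma cwt_nonneg (x : Agent) : 0 ≤ cwt N f x := by
  unfold cwt
  have h0 : (0:ℝ) ≤ ((posN N f x).card : ℝ) := Nat.cast_nonneg _
  have h1 : (0:ℝ) ≤ ((negN N f x).card : ℝ) := Nat.cast_nonneg _
  have hle : ((posN N f x).card : ℝ) / (((posN N f x).card : ℝ) + ((negN N f x).card : ℝ)) ≤ 1 :=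
    div_le_one_of_le₀ (by linarith) (by linarith)
  linarith

lemma indc_nonneg (x : Agent) (S : Finset Target) : 0 ≤ indc N f x S := by
  unfold indc; split <;> norm_num

lemma indc_le_one (x : Agent) (S : Finset Target) : indc N f x S ≤ 1 := by
  unfold indc; split <;> norm_num

lemma indc_mono (x : Agent) {S S' : Finset Target} (h : S ⊆ S') :
    indc N f x S ≤ indc N f x S' := by
  unfold indc
  split
  · rename_i hne
    rw [if_pos (hne.mono (inter_subset_inter (Finset.Subset.refl _) h))]
  · split <;> norm_num

lemma indc_empty (x : Agent) : indc N f x ∅ = 0 := by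
  simp [indc]

lemma indc_marginal (x : Agent) (S T : Finset Target) :
    indc N f x (S ∪ T) - indc N f x S ≤ ∑ t ∈ T, (indc N f x (insert t S) - indc N f x S) := by
  by_cases hS : (posN N f x ∩ S).Nonempty
  · have h1 : indc N f x S = 1 := if_pos hS
    have h2 : indc N f x (S ∪ T) = 1 := if_pos (hS.mono (inter_subset_inter (Finset.Subset.refl _) subset_union_left))
    have h3 : ∀ t ∈ T, (0:ℝ) ≤ indc N f x (insert t S) - indc N f x S := by
      intro t _
      have := indc_mono (N := N) (f := f) x (subset_insert t S)
      linarith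
    have := Finset.sum_nonneg h3
    linarith
  · have h1 : indc N f x S = 0 := if_neg hS
    simp only [h1, sub_zero]
    by_cases hST : (posN N f x ∩ (S ∪ T)).Nonempty
    · obtain ⟨u, hu⟩ := hST
      rw [mem_inter, mem_union] at hu
      have huT : u ∈ T := by
        rcases hu.2 with h | h
        · exact absurd ⟨u, mem_inter.mpr ⟨hu.1, h⟩⟩ hS
        · exact h
      have hterm : indc N f x (insert u S) = 1 :=
        if_pos ⟨u, mem_inter.mpr ⟨hu.1, mem_insert_self u S⟩⟩
      calc indc N f x (S ∪ T) ≤ 1 := indc_le_one x _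
        _ = indc N f x (insert u S) := hterm.symm
        _ ≤ ∑ t ∈ T, indc N f x (insert t S) :=
            Finset.single_le_sum (f := fun t => indc N f x (insert t S)) (fun t _ => indc_nonneg x _) huT
    · have h2 : indc N f x (S ∪ T) = 0 := if_neg hST
      rw [h2]
      exact Finset.sum_nonneg fun t _ => indc_nonneg x _

lemma Gcov_nonneg (A : Finset Agent) (S : Finset Target) : 0 ≤ Gcov N f A S :=
  Finset.sum_nonneg fun x _ => mul_nonneg (cwt_nonneg x) (indc_nonneg x S)

lemma Gcov_mono (A : Finset Agent) {S S' : Finset Target} (h : S ⊆ S') :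
    Gcov N f A S ≤ Gcov N f A S' :=
  Finset.sum_le_sum fun x _ => mul_le_mul_of_nonneg_left (indc_mono x h) (cwt_nonneg x)

lemma Gcov_empty (A : Finset Agent) : Gcov N f A ∅ = 0 := by
  unfold Gcov; simp [indc_empty]

lemma Gcov_marginal (A : Finset Agent) (S T : Finset Target) :
    Gcov N f A (S ∪ T) - Gcov N f A S ≤ ∑ t ∈ T, (Gcov N f A (insert t S) - Gcov N f A S) := by
  calc Gcov N f A (S ∪ T) - Gcov N f A S
      = ∑ x ∈ A, cwt N f x * (indc N f x (S ∪ T) - indc N f x S) := by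
        unfold Gcov; rw [← Finset.sum_sub_distrib]
        exact Finset.sum_congr rfl (fun x _ => by ring)
    _ ≤ ∑ x ∈ A, cwt N f x * ∑ t ∈ T, (indc N f x (insert t S) - indc N f x S) :=
        Finset.sum_le_sum fun x _ =>
          mul_le_mul_of_nonneg_left (indc_marginal x S T) (cwt_nonneg x)
    _ = ∑ t ∈ T, (Gcov N f A (insert t S) - Gcov N f A S) := by
        unfold Gcov
        simp_rw [Finset.mul_sum, mul_sub]
        rw [Finset.sum_comm]
        simp_rw [Finset.sum_sub_distrib]

lemma Gcov_subadd (A : Finset Agent) (S T : Finset Target) :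
    Gcov N f A (S ∪ T) ≤ Gcov N f A S + Gcov N f A T := by
  unfold Gcov
  rw [← Finset.sum_add_distrib]
  apply Finset.sum_le_sum
  intro x _
  rw [← mul_add]
  apply mul_le_mul_of_nonneg_left _ (cwt_nonneg x)
  unfold indc
  by_cases hS : (posN N f x ∩ S).Nonempty
  · rw [if_pos hS, if_pos (hS.mono (inter_subset_inter (Finset.Subset.refl _) subset_union_left))]
    have := (indc_nonneg (N := N) (f := f) x T)
    unfold indc at this
    linarith
  · by_cases hT : (posN N f x ∩ T).Nonempty
    · rw [if_pos (hT.mono (inter_subset_inter (Finset.Subset.refl _) subset_union_right)), if_neg hS, if_pos hT]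
      norm_num
    · have : ¬ (posN N f x ∩ (S ∪ T)).Nonempty := by
        rw [Finset.inter_union_distrib_left]
        simp only [Finset.not_nonempty_iff_eq_empty] at *
        rw [hS, hT, union_empty]
      rw [if_neg this, if_neg hS, if_neg hT]; norm_num

lemma Ggain_eq_Gcov [Fintype Target] (A : Finset Agent) {S : Finset Target}
    (hS : S ⊆ Finset.univ.filter (fun t => f t = true)) :
    Ggain N f A S = Gcov N f A S := by
  unfold Ggain Gcov
  rw [← Finset.sum_sub_distrib]
  refine Finset.sum_congr rfl fun x _ => ?_
  have hneg : negN N f x ∩ S = ∅ := by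
    rw [Finset.eq_empty_iff_forall_notMem]
    intro t ht
    rw [mem_inter] at ht
    have h1 : f t = false := (mem_filter.mp ht.1).2
    have h2 : f t = true := (mem_filter.mp (hS ht.2)).2
    simp [h1] at h2
  have hQ0 : Q N f ∅ x = if (N x).Nonempty then
      ((posN N f x).card : ℝ) / (((posN N f x).card : ℝ) + ((negN N f x).card : ℝ)) else 0 := by
    unfold Q
    simp
  have hQS : Q N f S x = if (posN N f x ∩ S).Nonempty then 1 else Q N f ∅ x := by
    rw [hQ0]
    unfold Q
    rw [hneg]
    simp
  by_cases h : (posN N f x ∩ S).Nonempty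
  · obtain ⟨t, ht⟩ := h
    have hNx : (N x).Nonempty := ⟨t, (mem_filter.mp (mem_inter.mp ht).1).1⟩
    rw [hQS, if_pos ⟨t, ht⟩, hQ0, if_pos hNx]
    unfold cwt indc
    rw [if_pos ⟨t, ht⟩]
    ring
  · rw [hQS, if_neg h]
    unfold indc
    rw [if_neg h]
    ring

lemma seq_subset_of_greedy {C : Finset Target} {g : Finset Target → ℝ} {seq : ℕ → Finset Target}
    (h : IsGreedyOn C g seq) : ∀ i, seq i ⊆ C := by
  intro i
  induction i with
  | zero => rw [h.1]; exact empty_subset _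
  | succ n ih =>
    obtain ⟨t, htC, hEq, _⟩ := h.2 n
    rw [hEq]
    exact insert_subset htC ih

lemma greedy_ratio [Fintype Agent] [Fintype Target]
    (A : Finset Agent) (seq : ℕ → Finset Target)
    (hgreedy : IsGreedyOn (Finset.univ.filter fun t => f t = true) (Ggain N f A) seq)
    (k : ℕ) (hk : 1 ≤ k)
    {T : Finset Target} (hTC : T ⊆ Finset.univ.filter (fun t => f t = true))
    (hTk : T.card ≤ k) :
    (1 - Real.exp (-1)) * Gcov N f A T ≤ Gcov N f A (seq k) := by
  have hseq := seq_subset_of_greedy hgreedy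
  have hkpos : (0:ℝ) < k := by exact_mod_cast hk
  have hcoef0 : (0:ℝ) ≤ 1 - 1/(k:ℝ) := by
    have : 1/(k:ℝ) ≤ 1 := by
      rw [div_le_one hkpos]; exact_mod_cast hk
    linarith
  have hstep : ∀ i, Gcov N f A T - Gcov N f A (seq (i+1)) ≤
      (1 - 1/(k:ℝ)) * (Gcov N f A T - Gcov N f A (seq i)) := by
    intro i
    obtain ⟨t, htC, hEq, hmax⟩ := hgreedy.2 i
    have hSi : seq i ⊆ Finset.univ.filter (fun t => f t = true) := hseq i
    have hins : ∀ t' ∈ T, Gcov N f A (insert t' (seq i)) ≤ Gcov N f A (seq (i+1)) := by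
      intro t' ht'
      have ht'C := hTC ht'
      have h1 := hmax t' ht'C
      rw [Ggain_eq_Gcov A (insert_subset ht'C hSi),
          Ggain_eq_Gcov A (insert_subset htC hSi)] at h1
      rw [hEq]
      exact h1
    have hm0 : 0 ≤ Gcov N f A (seq (i+1)) - Gcov N f A (seq i) := by
      rw [hEq]
      have := Gcov_mono (N := N) (f := f) A (subset_insert t (seq i))
      linarith
    have hsum : ∑ t' ∈ T, (Gcov N f A (insert t' (seq i)) - Gcov N f A (seq i)) ≤
        (T.card : ℝ) * (Gcov N f A (seq (i+1)) - Gcov N f A (seq i)) := by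
      calc ∑ t' ∈ T, (Gcov N f A (insert t' (seq i)) - Gcov N f A (seq i))
          ≤ ∑ _t' ∈ T, (Gcov N f A (seq (i+1)) - Gcov N f A (seq i)) :=
            Finset.sum_le_sum fun t' ht' => by
              have := hins t' ht'; linarith
        _ = (T.card : ℝ) * (Gcov N f A (seq (i+1)) - Gcov N f A (seq i)) := by
            rw [Finset.sum_const, nsmul_eq_mul]
    have h1 : Gcov N f A T - Gcov N f A (seq i) ≤
        (k:ℝ) * (Gcov N f A (seq (i+1)) - Gcov N f A (seq i)) := by
      calc Gcov N f A T - Gcov N f A (seq i)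
          ≤ Gcov N f A ((seq i) ∪ T) - Gcov N f A (seq i) := by
            have := Gcov_mono (N := N) (f := f) A (subset_union_right (s₁ := seq i) (s₂ := T))
            linarith
        _ ≤ ∑ t' ∈ T, (Gcov N f A (insert t' (seq i)) - Gcov N f A (seq i)) :=
            Gcov_marginal A (seq i) T
        _ ≤ (T.card : ℝ) * (Gcov N f A (seq (i+1)) - Gcov N f A (seq i)) := hsum
        _ ≤ (k:ℝ) * (Gcov N f A (seq (i+1)) - Gcov N f A (seq i)) :=
            mul_le_mul_of_nonneg_right (by exact_mod_cast hTk) hm0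
    have hdiv : (Gcov N f A T - Gcov N f A (seq i)) / (k:ℝ) ≤
        Gcov N f A (seq (i+1)) - Gcov N f A (seq i) := by
      rw [div_le_iff₀ hkpos]
      linarith [h1, mul_comm (k:ℝ) (Gcov N f A (seq (i+1)) - Gcov N f A (seq i))]
    have hring : (1 - 1/(k:ℝ)) * (Gcov N f A T - Gcov N f A (seq i)) =
        (Gcov N f A T - Gcov N f A (seq i)) -
          (Gcov N f A T - Gcov N f A (seq i)) / (k:ℝ) := by
      field_simp
    linarith
  have hiter : ∀ i, Gcov N f A T - Gcov N f A (seq i) ≤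
      (1 - 1/(k:ℝ))^i * Gcov N f A T := by
    intro i
    induction i with
    | zero =>
      rw [hgreedy.1, Gcov_empty, pow_zero]
      linarith
    | succ n ih =>
      calc Gcov N f A T - Gcov N f A (seq (n+1))
          ≤ (1 - 1/(k:ℝ)) * (Gcov N f A T - Gcov N f A (seq n)) := hstep n
        _ ≤ (1 - 1/(k:ℝ)) * ((1 - 1/(k:ℝ))^n * Gcov N f A T) :=
            mul_le_mul_of_nonneg_left ih hcoef0
        _ = (1 - 1/(k:ℝ))^(n+1) * Gcov N f A T := by ring
  have hpow : (1 - 1/(k:ℝ))^k ≤ Real.exp (-1) := by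
    have hb : 1 - 1/(k:ℝ) ≤ Real.exp (-(1/(k:ℝ))) := by
      have := Real.add_one_le_exp (-(1/(k:ℝ)))
      linarith
    calc (1 - 1/(k:ℝ))^k ≤ (Real.exp (-(1/(k:ℝ))))^k := pow_le_pow_left₀ hcoef0 hb k
      _ = Real.exp ((k:ℝ) * (-(1/(k:ℝ)))) := by rw [← Real.exp_nat_mul]
      _ = Real.exp (-1) := by
          congr 1
          field_simp
  have hfin := hiter k
  have hTnn := Gcov_nonneg (N := N) (f := f) A T
  have : (1 - 1/(k:ℝ))^k * Gcov N f A T ≤ Real.exp (-1) * Gcov N f A T :=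
    mul_le_mul_of_nonneg_right hpow hTnn
  linarith

lemma cover_partition_bound [Fintype Agent]
    (A : Finset Agent) {C : Finset Target} {m : ℕ} {B : ℝ} (hB : 0 ≤ B)
    (hT : ∀ T : Finset Target, T ⊆ C → T.card ≤ m → Gcov N f A T ≤ B) :
    ∀ n (S : Finset Target), S ⊆ C → S.card ≤ n * m → Gcov N f A S ≤ n * B := by
  intro n
  induction n with
  | zero =>
    intro S _ hcard
    have : S = ∅ := Finset.card_eq_zero.mp (Nat.le_zero.mp (by simpa using hcard))
    rw [this, Gcov_empty]
    simp
  | succ n ih =>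
    intro S hSC hcard
    by_cases h : S.card ≤ m
    · have h2 := hT S hSC h
      have h3 : (0:ℝ) ≤ n * B := mul_nonneg (Nat.cast_nonneg n) hB
      push_cast
      linarith
    · obtain ⟨P, hPS, hPcard⟩ := Finset.exists_subset_card_eq (s := S) (n := m) (le_of_not_ge h)
      have hunion : P ∪ (S \ P) = S := Finset.union_sdiff_of_subset hPS
      have h1 : Gcov N f A S ≤ Gcov N f A P + Gcov N f A (S \ P) := by
        calc Gcov N f A S = Gcov N f A (P ∪ (S \ P)) := by rw [hunion]
          _ ≤ _ := Gcov_subadd A P (S \ P)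
      have h2 : Gcov N f A P ≤ B := hT P (hPS.trans hSC) (le_of_eq hPcard)
      have h3 : (S \ P).card ≤ n * m := by
        rw [Finset.card_sdiff_of_subset hPS, hPcard]
        rw [Nat.succ_mul] at hcard
        omega
      have h4 := ih (S \ P) ((Finset.sdiff_subset).trans hSC) h3
      push_cast
      linarith

theorem grouped_greedy_fairness' [Fintype Agent] [Fintype Target]
    (w : ℕ) (hw : 1 ≤ w) (A : Fin w → Finset Agent)
    (K : ℕ) (hK : w ≤ K) (a : Fin w)
    (seq : ℕ → Finset Target)
    (hgreedy : IsGreedyOn (Finset.univ.filter fun t => f t = true) (Ggain N f (A a)) seq) :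
    ((1 - 1 / Real.exp 1) / (w : ℝ)) *
        sSup ((fun S => Ggain N f (A a) S) ''
          {S : Finset Target | S ⊆ Finset.univ.filter (fun t => f t = true) ∧ S.card ≤ K})
      ≤ Ggain N f (A a) (seq ((K + w - 1) / w)) := by
  have hw0 : 0 < w := hw
  set k := (K + w - 1) / w with hk
  have hk1 : 1 ≤ k := by
    rw [hk, Nat.le_div_iff_mul_le hw0]
    omega
  have hKwk : K ≤ w * k := by
    have h1 := Nat.div_add_mod (K + w - 1) w
    have h2 := Nat.mod_lt (K + w - 1) hw0
    rw [hk]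
    omega
  have hseqC := seq_subset_of_greedy hgreedy
  have hc1 : 0 < 1 - Real.exp (-1) := by
    have h : Real.exp (-1) < 1 := by
      rw [← Real.exp_zero]
      exact Real.exp_lt_exp.mpr (by norm_num)
    linarith
  have hGstar0 : 0 ≤ Gcov N f (A a) (seq k) := Gcov_nonneg _ _
  set B := Gcov N f (A a) (seq k) / (1 - Real.exp (-1)) with hB
  have hB0 : 0 ≤ B := div_nonneg hGstar0 (le_of_lt hc1)
  have hTB : ∀ T : Finset Target, T ⊆ Finset.univ.filter (fun t => f t = true) →
      T.card ≤ k → Gcov N f (A a) T ≤ B := by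
    intro T h1 h2
    rw [hB, le_div_iff₀ hc1]
    have h3 := greedy_ratio (N := N) (f := f) (A a) seq hgreedy k hk1 h1 h2
    linarith [mul_comm (Gcov N f (A a) T) (1 - Real.exp (-1))]
  have hsup : sSup ((fun S => Ggain N f (A a) S) ''
      {S : Finset Target | S ⊆ Finset.univ.filter (fun t => f t = true) ∧ S.card ≤ K})
      ≤ (w : ℝ) * B := by
    apply Real.sSup_le
    · rintro y ⟨S, ⟨hS1, hS2⟩, rfl⟩
      show Ggain N f (A a) S ≤ (w : ℝ) * B
      rw [Ggain_eq_Gcov (A a) hS1]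
      exact cover_partition_bound (A a) hB0 hTB w S hS1 (hS2.trans hKwk)
    · exact mul_nonneg (Nat.cast_nonneg w) hB0
  have hrw : (1:ℝ) - 1 / Real.exp 1 = 1 - Real.exp (-1) := by
    rw [Real.exp_neg, one_div]
  have hcoef0 : (0:ℝ) ≤ (1 - 1 / Real.exp 1) / (w : ℝ) := by
    rw [hrw]
    positivity
  have hwne : (w : ℝ) ≠ 0 := by positivity
  have hgoal : ((1 - 1 / Real.exp 1) / (w : ℝ)) * ((w : ℝ) * B) =
      Gcov N f (A a) (seq k) := by
    rw [hrw, hB]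
    field_simp
  calc ((1 - 1 / Real.exp 1) / (w : ℝ)) *
        sSup ((fun S => Ggain N f (A a) S) ''
          {S : Finset Target | S ⊆ Finset.univ.filter (fun t => f t = true) ∧ S.card ≤ K})
      ≤ ((1 - 1 / Real.exp 1) / (w : ℝ)) * ((w : ℝ) * B) :=
        mul_le_mul_of_nonneg_left hsup hcoef0
    _ = Gcov N f (A a) (seq k) := hgoal
    _ = Ggain N f (A a) (seq k) := (Ggain_eq_Gcov (A a) (hseqC k)).symm

end Aux

/-- Grouped fairness guarantee with positive reveals only: running greedy on group `a`'s
gain with budget `K_a = ⌈K/w⌉` over the positive targets achieves, for that group, at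
least a `(1 − 1/e)/w` fraction of the optimal gain `OPT_a^K` achievable for the group
alone with the full budget `K`. -/
theorem grouped_greedy_fairness [Fintype Agent] [Fintype Target] [DecidableEq Target]
    (N : Agent → Finset Target) (f : Target → Bool)
    (w : ℕ) (hw : 1 ≤ w) (A : Fin w → Finset Agent)
    (K : ℕ) (hK : w ≤ K) (a : Fin w)
    (seq : ℕ → Finset Target)
    (hgreedy : IsGreedyOn (Finset.univ.filter fun t => f t = true) (Ggain N f (A a)) seq) :
    ((1 - 1 / Real.exp 1) / (w : ℝ)) *
        sSup ((fun S => Ggain N f (A a) S) ''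
          {S : Finset Target | S ⊆ Finset.univ.filter (fun t => f t = true) ∧ S.card ≤ K})
      ≤ Ggain N f (A a) (seq ((K + w - 1) / w)) :=
  grouped_greedy_fairness' (N := N) (f := f) w hw A K hK a seq hgreedy
end

section
/- In the max-K-cover reduction graph, for any set S of revealed positive targets the social welfare equals n/2 + (1/2)·|⋃_{t_j ∈ S} C_j|. Consequently, F(S) ≥ n/2 + E/2 if and only if the sets corresponding to S cover at least E elements. -/
open Finset

variable {Agent Target : Type*}

/-- In the max-K-cover reduction graph (one agent per element, one positive target per
set, edge iff membership, and one private negative target per positive edge so that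
`δ⁻ₓ = δ⁺ₓ ≥ 1`), the welfare of any set `S` of revealed positive targets equals
`n/2 + |⋃_{j ∈ S} C_j|/2`; hence `F(S) ≥ n/2 + E/2` iff `S` covers at least `E`
elements. -/
theorem max_cover_reduction_welfare (n m : ℕ) (C : Fin m → Finset (Fin n))
    (hcover : ∀ i : Fin n, ∃ j : Fin m, i ∈ C j)
    (N : Fin n → Finset (Fin m ⊕ Fin n × Fin m))
    (hN : ∀ i : Fin n, N i =
      ((Finset.univ.filter fun j => i ∈ C j).image Sum.inl) ∪
        ((Finset.univ.filter fun j => i ∈ C j).image fun j => Sum.inr (i, j)))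
    (f : Fin m ⊕ Fin n × Fin m → Bool) (hf : ∀ t, f t = t.isLeft)
    (S : Finset (Fin m)) :
    F N f (S.image Sum.inl) = (n : ℝ) / 2 + ((S.biUnion C).card : ℝ) / 2 ∧
    ∀ E : ℕ, ((n : ℝ) / 2 + (E : ℝ) / 2 ≤ F N f (S.image Sum.inl) ↔
      E ≤ (S.biUnion C).card) := by
  have hQ : ∀ i : Fin n, Q N f (S.image Sum.inl) i =
      if i ∈ S.biUnion C then 1 else 1/2 := by
    intro i
    set D := Finset.univ.filter (fun j => i ∈ C j) with hD
    have hDne : D.Nonempty := by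
      obtain ⟨j, hj⟩ := hcover i
      exact ⟨j, by simp [hD, hj]⟩
    have hpos : posN N f i = D.image Sum.inl := by
      unfold posN
      rw [hN i, Finset.filter_union]
      ext t
      simp [hf, Sum.isLeft]
      aesop
    have hneg : negN N f i = D.image (fun j => Sum.inr (i, j)) := by
      unfold negN
      rw [hN i, Finset.filter_union]
      ext t
      simp [hf, Sum.isLeft]
      aesop
    have hinter : posN N f i ∩ S.image Sum.inl = (D ∩ S).image Sum.inl := by
      rw [hpos]
      ext t
      simp
      aesop
    have hneginter : negN N f i ∩ S.image Sum.inl = ∅ := by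
      rw [hneg]
      ext t
      simp
      rintro j _ rfl
      simp
    unfold Q
    rw [hinter, hneginter, hpos, hneg]
    by_cases hmem : i ∈ S.biUnion C
    · have : (D ∩ S).Nonempty := by
        simp only [Finset.mem_biUnion] at hmem
        obtain ⟨j, hjS, hjC⟩ := hmem
        exact ⟨j, Finset.mem_inter.2 ⟨by simp [hD, hjC], hjS⟩⟩
      rw [if_pos (this.image (Sum.inl : Fin m → Fin m ⊕ Fin n × Fin m)), if_pos hmem]
    · have hne : ¬ ((D ∩ S).image (Sum.inl : Fin m → Fin m ⊕ Fin n × Fin m)).Nonempty := by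
        rw [Finset.image_nonempty]
        intro ⟨j, hj⟩
        rw [Finset.mem_inter] at hj
        exact hmem (Finset.mem_biUnion.2 ⟨j, hj.2, by simpa [hD] using hj.1⟩)
      rw [if_neg hne, if_neg hmem]
      have hNne : (N i).Nonempty := by
        rw [hN i]
        exact Finset.Nonempty.mono Finset.subset_union_left (hDne.image _)
      rw [if_pos hNne]
      rw [Finset.card_image_of_injective _ Sum.inl_injective,
        Finset.card_image_of_injective _ (fun a b h => by simpa using h)]
      have hd : (0:ℝ) < D.card := by
        exact_mod_cast Finset.card_pos.2 hDne
      rw [Finset.card_empty]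
      push_cast
      field_simp
      ring_nf
      exact mul_inv_cancel₀ hd.ne'
  have hF : F N f (S.image Sum.inl) = (n : ℝ) / 2 + ((S.biUnion C).card : ℝ) / 2 := by
    unfold F
    rw [Finset.sum_congr rfl (fun i _ => hQ i)]
    have hsplit : ∀ i : Fin n, (if i ∈ S.biUnion C then (1:ℝ) else 1/2)
        = 1/2 + (if i ∈ S.biUnion C then (1:ℝ)/2 else 0) := by
      intro i; split <;> norm_num
    rw [Finset.sum_congr rfl (fun i _ => hsplit i), Finset.sum_add_distrib,
      Finset.sum_ite_mem, Finset.univ_inter, Finset.sum_const, Finset.sum_const]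
    simp only [nsmul_eq_mul, Finset.card_univ, Fintype.card_fin]
    ring
  refine ⟨hF, fun E => ?_⟩
  rw [hF]
  constructor
  · intro h
    have : (E : ℝ) ≤ ((S.biUnion C).card : ℝ) := by linarith
    exact_mod_cast this
  · intro h
    have : (E : ℝ) ≤ ((S.biUnion C).card : ℝ) := by exact_mod_cast h
    linarith
end

section
/- In the K-clique reduction graph built from a θ-regular graph G_c = (V, E_c) with n = |E_c| edges, for any set S of K revealed negative vertex-targets the social welfare equals n/3 + (1/6)·e(S, V∖S) + (2/3)·e(S), where e(S) is the number of edges of G_c with both endpoints in S and e(S, V∖S) the number of edges with exactly one endpoint in S. In particular, since e(S, V∖S) + 2·e(S) = Kθ, the welfare equals n/3 + Kθ/6 + e(S)/3, and it is at least n/3 + Kθ/6 + (1/3)·binom(K,2) if and only if S is a K-clique in G_c. -/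
open Finset

variable {V : Type*} [Fintype V] [DecidableEq V]

/-- The welfare contribution of the agent associated with an edge, given a set `S` of
revealed negative vertex-targets: `1` if both endpoints are in `S`, `1/2` if exactly
one is, and `1/3` otherwise. -/
noncomputable def edgeWelfare (S : Finset V) : Sym2 V → ℝ :=
  Sym2.lift ⟨fun u v =>
    if u ∈ S then (if v ∈ S then 1 else 1 / 2) else (if v ∈ S then 1 / 2 else 1 / 3),
    by intro u v; by_cases hu : u ∈ S <;> by_cases hv : v ∈ S <;> simp [hu, hv]⟩

/-- Whether both endpoints of an edge lie in `S`. -/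
def bothIn (S : Finset V) : Sym2 V → Bool :=
  Sym2.lift ⟨fun u v => decide (u ∈ S) && decide (v ∈ S), fun _ _ => Bool.and_comm _ _⟩

/-- Whether exactly one endpoint of an edge lies in `S`. -/
def exactlyOneIn (S : Finset V) : Sym2 V → Bool :=
  Sym2.lift ⟨fun u v => xor (decide (u ∈ S)) (decide (v ∈ S)), fun _ _ => Bool.xor_comm _ _⟩

omit [Fintype V] in
lemma aux_card_offdiag (S : Finset V) :
    (S.sym2.filter fun e => ¬ e.IsDiag).card = S.card.choose 2 := by
  have hdiag : (S.sym2.filter fun e => e.IsDiag) = S.image Sym2.diag := by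
    ext e
    induction e using Sym2.ind with
    | _ u v =>
      simp only [mem_filter, Finset.mk_mem_sym2_iff, Sym2.isDiag_iff_proj_eq, mem_image]
      constructor
      · rintro ⟨⟨hu, -⟩, h⟩
        exact ⟨u, hu, by simp [Sym2.diag, h]⟩
      · rintro ⟨a, ha, h⟩
        simp only [Sym2.diag, Sym2.eq_iff] at h
        rcases h with ⟨h1, h2⟩ | ⟨h1, h2⟩ <;> subst h1 <;> subst h2 <;> simp [ha]
  have h1 : (S.sym2.filter fun e => e.IsDiag).card = S.card := by
    rw [hdiag, Finset.card_image_of_injective _ Sym2.diag_injective]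
  have h2 := Finset.card_filter_add_card_filter_not
    (s := S.sym2) (p := fun e => e.IsDiag)
  have h3 : S.sym2.card = (S.card + 1).choose 2 := Finset.card_sym2 S
  have h4 : (S.card + 1).choose 2 = S.card.choose 1 + S.card.choose 2 :=
    Nat.choose_succ_succ _ _
  simp only [Nat.choose_one_right] at h4
  omega

omit [Fintype V] in
lemma aux_count (S : Finset V) {u v : V} (huv : u ≠ v) :
    (S.filter (· ∈ s(u,v))).card =
      (if exactlyOneIn S s(u,v) then 1 else 0) + 2 * (if bothIn S s(u,v) then 1 else 0) := by
  have : (S.filter (· ∈ s(u,v))) = S.filter (fun w => w = u ∨ w = v) := by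
    apply filter_congr; intro w _; simp [Sym2.mem_iff]
  rw [this, filter_or, Finset.filter_eq', Finset.filter_eq']
  have hcard : #({u} ∪ {v} : Finset V) = 2 := by
    rw [Finset.card_union_of_disjoint (by simp [huv])]; simp
  by_cases hu : u ∈ S <;> by_cases hv : v ∈ S <;>
    simp [hu, hv, exactlyOneIn, bothIn, hcard, Finset.card_pair huv]


/-- In the K-clique reduction graph built from a `θ`-regular graph `G_c` with `n` edges,
for any set `S` of `K` revealed negative vertex-targets the social welfare equals
`n/3 + e(S, V∖S)/6 + 2·e(S)/3`; since `e(S,V∖S) + 2·e(S) = Kθ` it also equals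
`n/3 + Kθ/6 + e(S)/3`, and it is at least `n/3 + Kθ/6 + C(K,2)/3` iff `S` is a
`K`-clique of `G_c`. -/
theorem clique_reduction_welfare (G : SimpleGraph V) [DecidableRel G.Adj]
    (θ K : ℕ) (hreg : G.IsRegularOfDegree θ)
    (S : Finset V) (hS : S.card = K) :
    (∑ e ∈ G.edgeFinset, edgeWelfare S e) =
        (G.edgeFinset.card : ℝ) / 3 +
          ((G.edgeFinset.filter fun e => exactlyOneIn S e).card : ℝ) / 6 +
          2 * ((G.edgeFinset.filter fun e => bothIn S e).card : ℝ) / 3 ∧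
    (G.edgeFinset.filter fun e => exactlyOneIn S e).card +
        2 * (G.edgeFinset.filter fun e => bothIn S e).card = K * θ ∧
    (∑ e ∈ G.edgeFinset, edgeWelfare S e) =
        (G.edgeFinset.card : ℝ) / 3 + (K : ℝ) * (θ : ℝ) / 6 +
          ((G.edgeFinset.filter fun e => bothIn S e).card : ℝ) / 3 ∧
    ((G.edgeFinset.card : ℝ) / 3 + (K : ℝ) * (θ : ℝ) / 6 + (K.choose 2 : ℝ) / 3 ≤
        ∑ e ∈ G.edgeFinset, edgeWelfare S e ↔ G.IsClique (S : Set V)) := by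
  classical
  -- Part 1
  have hW : (∑ e ∈ G.edgeFinset, edgeWelfare S e) =
      (G.edgeFinset.card : ℝ) / 3 +
        ((G.edgeFinset.filter fun e => exactlyOneIn S e).card : ℝ) / 6 +
        2 * ((G.edgeFinset.filter fun e => bothIn S e).card : ℝ) / 3 := by
    have hdecomp : ∀ e ∈ G.edgeFinset, edgeWelfare S e =
        1/3 + (if exactlyOneIn S e then (1:ℝ)/6 else 0)
            + (if bothIn S e then (2:ℝ)/3 else 0) := by
      intro e _
      induction e using Sym2.ind with
      | _ u v =>
        by_cases hu : u ∈ S <;> by_cases hv : v ∈ S <;>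
          simp [edgeWelfare, bothIn, exactlyOneIn, hu, hv] <;> norm_num
    rw [Finset.sum_congr rfl hdecomp, Finset.sum_add_distrib, Finset.sum_add_distrib,
      Finset.sum_const, ← Finset.sum_filter, ← Finset.sum_filter,
      Finset.sum_const, Finset.sum_const]
    push_cast
    ring
  -- Part 2
  have hcount : (G.edgeFinset.filter fun e => exactlyOneIn S e).card +
      2 * (G.edgeFinset.filter fun e => bothIn S e).card = K * θ := by
    have h2 : K * θ = ∑ v ∈ S, G.degree v := by
      rw [Finset.sum_congr rfl (fun v _ => hreg v), Finset.sum_const, hS, smul_eq_mul]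
    have h3 : ∑ v ∈ S, G.degree v = ∑ e ∈ G.edgeFinset, (S.filter (· ∈ e)).card := by
      have h1 : ∀ v ∈ S, G.degree v = (G.edgeFinset.filter fun e => v ∈ e).card := by
        intro v _
        rw [← SimpleGraph.card_incidenceFinset_eq_degree,
          SimpleGraph.incidenceFinset_eq_filter]
      rw [Finset.sum_congr rfl h1]
      simp_rw [Finset.card_filter]
      exact Finset.sum_comm
    have h4 : ∀ e ∈ G.edgeFinset, (S.filter (· ∈ e)).card =
        (if exactlyOneIn S e then 1 else 0) + 2 * (if bothIn S e then 1 else 0) := by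
      intro e he
      induction e using Sym2.ind with
      | _ u v =>
        exact aux_count S (G.ne_of_adj ((SimpleGraph.mem_edgeSet G).1
          (SimpleGraph.mem_edgeFinset.1 he)))
    rw [← h2] at *
    rw [h2, h3, Finset.sum_congr rfl h4, Finset.sum_add_distrib, ← Finset.mul_sum,
      ← Finset.sum_filter, ← Finset.sum_filter, Finset.sum_const, Finset.sum_const]
    simp [mul_comm]
  -- Part 3
  have hW2 : (∑ e ∈ G.edgeFinset, edgeWelfare S e) =
      (G.edgeFinset.card : ℝ) / 3 + (K : ℝ) * (θ : ℝ) / 6 +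
        ((G.edgeFinset.filter fun e => bothIn S e).card : ℝ) / 3 := by
    have := hcount
    have hc : ((G.edgeFinset.filter fun e => exactlyOneIn S e).card : ℝ) +
        2 * ((G.edgeFinset.filter fun e => bothIn S e).card : ℝ) = (K : ℝ) * θ := by
      exact_mod_cast congrArg (Nat.cast : ℕ → ℝ) hcount
    rw [hW]; linarith
  refine ⟨hW, hcount, hW2, ?_⟩
  -- Part 4
  have hsub : (G.edgeFinset.filter fun e => bothIn S e) ⊆
      S.sym2.filter (fun e => ¬ e.IsDiag) := by
    intro e he
    rw [mem_filter] at he ⊢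
    obtain ⟨he1, he2⟩ := he
    induction e using Sym2.ind with
    | _ u v =>
      simp only [bothIn, Sym2.lift_mk, Bool.and_eq_true, decide_eq_true_eq] at he2
      refine ⟨Finset.mk_mem_sym2_iff.2 ⟨he2.1, he2.2⟩, ?_⟩
      simp only [Sym2.isDiag_iff_proj_eq]
      exact G.ne_of_adj ((SimpleGraph.mem_edgeSet G).1 (SimpleGraph.mem_edgeFinset.1 he1))
  have hble : (G.edgeFinset.filter fun e => bothIn S e).card ≤ K.choose 2 := by
    have := Finset.card_le_card hsub
    rwa [aux_card_offdiag, hS] at this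
  constructor
  · intro h
    rw [hW2] at h
    have hbge : (K.choose 2 : ℝ) ≤ ((G.edgeFinset.filter fun e => bothIn S e).card : ℝ) := by
      linarith
    have hbge' : K.choose 2 ≤ (G.edgeFinset.filter fun e => bothIn S e).card := by
      exact_mod_cast hbge
    have heq : (G.edgeFinset.filter fun e => bothIn S e) =
        S.sym2.filter (fun e => ¬ e.IsDiag) :=
      Finset.eq_of_subset_of_card_le hsub (by rw [aux_card_offdiag, hS]; exact hbge')
    intro u hu v hv huv
    have hmem : s(u, v) ∈ S.sym2.filter (fun e => ¬ e.IsDiag) := by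
      simp only [mem_filter, Finset.mk_mem_sym2_iff, Sym2.isDiag_iff_proj_eq]
      exact ⟨⟨hu, hv⟩, huv⟩
    rw [← heq, mem_filter] at hmem
    exact (SimpleGraph.mem_edgeSet G).1 (SimpleGraph.mem_edgeFinset.1 hmem.1)
  · intro hcl
    have heq : (G.edgeFinset.filter fun e => bothIn S e) =
        S.sym2.filter (fun e => ¬ e.IsDiag) := by
      refine Finset.Subset.antisymm hsub ?_
      intro e he
      rw [mem_filter] at he ⊢
      induction e using Sym2.ind with
      | _ u v =>
        obtain ⟨h1, h2⟩ := he
        rw [Finset.mk_mem_sym2_iff] at h1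
        rw [Sym2.isDiag_iff_proj_eq] at h2
        have hadj : G.Adj u v := hcl h1.1 h1.2 h2
        refine ⟨SimpleGraph.mem_edgeFinset.2 ((SimpleGraph.mem_edgeSet G).2 hadj), ?_⟩
        simp [bothIn, h1.1, h1.2]
    rw [hW2, heq, aux_card_offdiag, hS]
end

section
/- For a monotone submodular function F with F(∅) = 0 on subsets of a finite set T, the greedy algorithm that iteratively adds the element of maximum marginal gain produces, after K steps, a set S_g with F(S_g) ≥ (1 − (1 − 1/K)^K)·max_{|S| ≤ K} F(S) ≥ (1 − 1/e)·max_{|S| ≤ K} F(S). -/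
open Finset

/-- A greedy sequence for objective `g`: start from `∅` and at each step insert an
element of maximal resulting objective value. -/
def IsGreedySeq {T : Type*} [DecidableEq T] (g : Finset T → ℝ)
    (seq : ℕ → Finset T) : Prop :=
  seq 0 = ∅ ∧ ∀ i : ℕ, ∃ t : T, seq (i + 1) = insert t (seq i) ∧
    ∀ t' : T, g (insert t' (seq i)) ≤ g (insert t (seq i))

/-- Nemhauser–Wolsey–Fisher: for a nonnegative monotone submodular `F` with `F(∅) = 0`,
the greedy algorithm after `K` steps satisfies
`F(S_g) ≥ (1 − (1 − 1/K)^K)·max_{|S|≤K} F(S) ≥ (1 − 1/e)·max_{|S|≤K} F(S)`. -/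
theorem greedy_submodular_guarantee {T : Type*} [Fintype T] [DecidableEq T]
    (F : Finset T → ℝ)
    (hnonneg : ∀ S : Finset T, 0 ≤ F S)
    (hmono : ∀ A B : Finset T, A ⊆ B → F A ≤ F B)
    (hsub : ∀ (A B : Finset T) (t : T), A ⊆ B → t ∉ B →
      F (insert t B) - F B ≤ F (insert t A) - F A)
    (h0 : F ∅ = 0)
    (K : ℕ) (hK : 0 < K) (seq : ℕ → Finset T) (hgreedy : IsGreedySeq F seq) :
    ∀ S : Finset T, S.card ≤ K →
      (1 - (1 - 1 / (K : ℝ)) ^ K) * F S ≤ F (seq K) ∧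
      (1 - 1 / Real.exp 1) * F S ≤ F (seq K) := by
  obtain ⟨hseq0, hstep⟩ := hgreedy
  have hKR : (1:ℝ) ≤ (K:ℝ) := by exact_mod_cast hK
  have hKpos : (0:ℝ) < (K:ℝ) := by linarith
  -- telescoping submodularity bound
  have tele : ∀ (S A : Finset T), F (S ∪ A) - F A ≤ ∑ t ∈ S, (F (insert t A) - F A) := by
    intro S A
    induction S using Finset.induction_on with
    | empty => simp
    | @insert s S' hs ih =>
      rw [Finset.sum_insert hs, Finset.insert_union]
      have h1 : F (insert s (S' ∪ A)) - F (S' ∪ A) ≤ F (insert s A) - F A := by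
        by_cases hsA : s ∈ S' ∪ A
        · rw [Finset.insert_eq_self.mpr hsA]
          have := hmono A (insert s A) (Finset.subset_insert _ _)
          linarith
        · exact hsub A (S' ∪ A) s Finset.subset_union_right hsA
      linarith
  have gain : ∀ i, 0 ≤ F (seq (i+1)) - F (seq i) := by
    intro i
    obtain ⟨t, ht, _⟩ := hstep i
    have := hmono (seq i) (seq (i+1)) (by rw [ht]; exact Finset.subset_insert _ _)
    linarith
  intro S hS
  have key : ∀ i, F S - F (seq i) ≤ (K:ℝ) * (F (seq (i+1)) - F (seq i)) := by
    intro i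
    obtain ⟨t, ht, hmax⟩ := hstep i
    have h1 : F S ≤ F (S ∪ seq i) := hmono _ _ Finset.subset_union_left
    have h2 := tele S (seq i)
    have h3 : ∑ t' ∈ S, (F (insert t' (seq i)) - F (seq i)) ≤
        (S.card : ℝ) * (F (seq (i+1)) - F (seq i)) := by
      have hb : ∀ t' ∈ S, F (insert t' (seq i)) - F (seq i) ≤
          F (seq (i+1)) - F (seq i) := by
        intro t' _
        have := hmax t'
        rw [ht]
        linarith
      calc ∑ t' ∈ S, (F (insert t' (seq i)) - F (seq i))
          ≤ ∑ _t' ∈ S, (F (seq (i+1)) - F (seq i)) := Finset.sum_le_sum hb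
        _ = (S.card : ℝ) * (F (seq (i+1)) - F (seq i)) := by
            rw [Finset.sum_const, nsmul_eq_mul]
    have h4 : (S.card : ℝ) * (F (seq (i+1)) - F (seq i)) ≤
        (K:ℝ) * (F (seq (i+1)) - F (seq i)) := by
      have : (S.card : ℝ) ≤ (K:ℝ) := by exact_mod_cast hS
      exact mul_le_mul_of_nonneg_right this (gain i)
    linarith
  have hc : (0:ℝ) ≤ 1 - 1/(K:ℝ) := by
    have : 1/(K:ℝ) ≤ 1 := by
      rw [div_le_one hKpos]; exact hKR
    linarith
  have decay : ∀ i, F S - F (seq i) ≤ (1 - 1/(K:ℝ))^i * F S := by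
    intro i
    induction i with
    | zero => simp [hseq0, h0]
    | succ n ihn =>
      have hk := key n
      have step : F S - F (seq (n+1)) ≤ (1 - 1/(K:ℝ)) * (F S - F (seq n)) := by
        have h' : (F S - F (seq n)) / (K:ℝ) ≤ F (seq (n+1)) - F (seq n) := by
          rw [div_le_iff₀ hKpos]; linarith [hk]
        have heq : (1 - 1/(K:ℝ)) * (F S - F (seq n)) =
            (F S - F (seq n)) - (F S - F (seq n))/(K:ℝ) := by ring
        linarith
      calc F S - F (seq (n+1)) ≤ (1 - 1/(K:ℝ)) * (F S - F (seq n)) := step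
        _ ≤ (1 - 1/(K:ℝ)) * ((1 - 1/(K:ℝ))^n * F S) :=
            mul_le_mul_of_nonneg_left ihn hc
        _ = (1 - 1/(K:ℝ))^(n+1) * F S := by ring
  have first : (1 - (1 - 1 / (K : ℝ)) ^ K) * F S ≤ F (seq K) := by
    have := decay K
    nlinarith
  refine ⟨first, ?_⟩
  have hexp : (1 - 1/(K:ℝ))^K ≤ 1 / Real.exp 1 := by
    have h1 : 1 - 1/(K:ℝ) ≤ Real.exp (-(1/(K:ℝ))) := by
      have := Real.add_one_le_exp (-(1/(K:ℝ)))
      linarith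
    have h2 : (1 - 1/(K:ℝ))^K ≤ (Real.exp (-(1/(K:ℝ))))^K :=
      pow_le_pow_left₀ hc h1 K
    have h3 : (Real.exp (-(1/(K:ℝ))))^K = Real.exp ((K:ℝ) * (-(1/(K:ℝ)))) := by
      rw [← Real.exp_nat_mul]
    have h4 : (K:ℝ) * (-(1/(K:ℝ))) = -1 := by
      field_simp
    rw [h3, h4, Real.exp_neg, ← one_div] at h2
    exact h2
  have : (1 - 1 / Real.exp 1) * F S ≤ (1 - (1 - 1 / (K : ℝ)) ^ K) * F S :=
    mul_le_mul_of_nonneg_right (by linarith) (hnonneg S)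
  linarith
end
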